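/- Consider dual dynamics λ̇₁ = [Ax(t) − g]⁺_{λ₁}, λ̇₂ = Cx(t) − h along a trajectory x(t) that remains in a box S2 disjoint from the polyhedron S1 = {x : Ax ≤ g, Cx = h}. Then there exists a vector z and ε > 0 such that z^T λ(t) ≥ z^T λ(0) + εt for all t ≥ 0, and hence limsup_{t→∞} |λ_i(t)| = ∞ for some coordinate i. -/

import Mathlib

open Matrix

section FarkasAux
open Set Pointwise


lemma exists_cert {n p q : ℕ}
    (A : Matrix (Fin p) (Fin n) ℝ) (C : Matrix (Fin q) (Fin n) ℝ)
    (g : Fin p → ℝ) (h : Fin q → ℝ) (dlo dhi : Fin n → ℝ) (hbox : dlo ≤ dhi)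
    (hdisj : {x : Fin n → ℝ | A.mulVec x ≤ g ∧ C.mulVec x = h} ∩
             {x : Fin n → ℝ | dlo ≤ x ∧ x ≤ dhi} = ∅) :
    ∃ (z₁ : Fin p → ℝ) (z₂ : Fin q → ℝ) (ε : ℝ), 0 < ε ∧ (∀ i, 0 ≤ z₁ i) ∧
      ∀ v : Fin n → ℝ, dlo ≤ v → v ≤ dhi →
        ε ≤ z₁ ⬝ᵥ (A.mulVec v - g) + z₂ ⬝ᵥ (C.mulVec v - h) := by
  classical
  set F : (Fin n → ℝ) → (Fin p → ℝ) × (Fin q → ℝ) :=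
    fun v => (A.mulVec v - g, C.mulVec v - h) with hF
  have hFcont : Continuous F := by
    have h1 : Continuous fun v : Fin n → ℝ => A.mulVec v :=
      (Matrix.mulVecLin A).continuous_of_finiteDimensional
    have h2 : Continuous fun v : Fin n → ℝ => C.mulVec v :=
      (Matrix.mulVecLin C).continuous_of_finiteDimensional
    exact ((h1.sub continuous_const).prodMk (h2.sub continuous_const))
  set K := F '' (Set.Icc dlo dhi) with hK
  have hKcpt : IsCompact K := (isCompact_Icc).image hFcont
  have hFaff : ∀ (x y : Fin n → ℝ) (a b : ℝ), a + b = 1 →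
      F (a • x + b • y) = a • F x + b • F y := by
    intro x y a b hab
    apply Prod.ext
    · funext i
      simp only [hF, Matrix.mulVec_add, Matrix.mulVec_smul, Pi.add_apply, Pi.sub_apply,
        Pi.smul_apply, smul_eq_mul, Prod.fst_add, Prod.smul_fst]
      ring_nf
      linear_combination (g i) * hab
    · funext j
      simp only [hF, Matrix.mulVec_add, Matrix.mulVec_smul, Pi.add_apply, Pi.sub_apply,
        Pi.smul_apply, smul_eq_mul, Prod.snd_add, Prod.smul_snd]
      ring_nf
      linear_combination (h j) * hab
  have hKconv : Convex ℝ K := by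
    rintro _ ⟨x, hx, rfl⟩ _ ⟨y, hy, rfl⟩ a b ha hb hab
    exact ⟨a • x + b • y, (convex_Icc dlo dhi) hx hy ha hb hab, hFaff x y a b hab⟩
  set L : Set ((Fin p → ℝ) × (Fin q → ℝ)) := {y | (∀ i, 0 ≤ y.1 i) ∧ y.2 = 0} with hL
  have hLclosed : IsClosed L := by
    have : L = (⋂ i, {y : (Fin p → ℝ) × (Fin q → ℝ) | 0 ≤ y.1 i}) ∩
        {y | y.2 = 0} := by
      ext y; simp [hL, Set.mem_iInter]
    rw [this]
    exact (isClosed_iInter fun i =>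
      isClosed_le continuous_const ((continuous_apply i).comp (continuous_fst (X := Fin p → ℝ) (Y := Fin q → ℝ)))).inter
      (isClosed_eq continuous_snd continuous_const)
  have hLconv : Convex ℝ L := by
    rintro y ⟨hy1, hy2⟩ z ⟨hz1, hz2⟩ a b ha hb hab
    refine ⟨fun i => ?_, ?_⟩
    · have : (a • y + b • z).1 i = a * y.1 i + b * z.1 i := rfl
      rw [this]
      exact add_nonneg (mul_nonneg ha (hy1 i)) (mul_nonneg hb (hz1 i))
    · show a • y.2 + b • z.2 = 0
      rw [hy2, hz2]; simp
  set D := L + K with hD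
  have hDclosed : IsClosed D := hLclosed.vadd_right_of_isCompact hKcpt
  have hDconv : Convex ℝ D := hLconv.add hKconv
  have h0 : (0 : (Fin p → ℝ) × (Fin q → ℝ)) ∉ D := by
    rintro ⟨c, hc, k, ⟨v, hv, rfl⟩, hsum⟩
    have hvmem : v ∈ {x : Fin n → ℝ | A.mulVec x ≤ g ∧ C.mulVec x = h} ∩
        {x : Fin n → ℝ | dlo ≤ x ∧ x ≤ dhi} := by
      constructor
      · constructor
        · intro i
          have h1 : c.1 i + (A.mulVec v - g) i = 0 := congrFun (congrArg Prod.fst hsum) i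
          have := hc.1 i
          simp only [Pi.sub_apply] at h1
          linarith
        · funext j
          have h2 : c.2 j + (C.mulVec v - h) j = 0 := congrFun (congrArg Prod.snd hsum) j
          have : c.2 j = 0 := congrFun hc.2 j
          simp only [Pi.sub_apply] at h2
          linarith
      · exact ⟨hv.1, hv.2⟩
    rw [hdisj] at hvmem
    exact hvmem
  obtain ⟨f, u, hu0, hub⟩ := geometric_hahn_banach_point_closed hDconv hDclosed h0
  rw [map_zero] at hu0
  set z₁ : Fin p → ℝ := fun i => f ((fun j => if i = j then 1 else 0), 0) with hz₁
  set z₂ : Fin q → ℝ := fun j => f (0, (fun k => if j = k then 1 else 0)) with hz₂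
  have hrep : ∀ (a : Fin p → ℝ) (b : Fin q → ℝ), f (a, b) = z₁ ⬝ᵥ a + z₂ ⬝ᵥ b := by
    intro a b
    have hsplit : (a, b) = (a, 0) + (0, b) := by simp
    rw [hsplit, map_add]
    have e1 : f (a, 0) = z₁ ⬝ᵥ a := by
      have := LinearMap.pi_apply_eq_sum_univ
        (f.toLinearMap.comp (LinearMap.inl ℝ (Fin p → ℝ) (Fin q → ℝ))) a
      simp only [LinearMap.coe_comp, Function.comp_apply, LinearMap.coe_inl,
        ContinuousLinearMap.coe_coe] at this
      rw [this, dotProduct]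
      exact Finset.sum_congr rfl fun i _ => by simp [hz₁, smul_eq_mul, mul_comm]
    have e2 : f (0, b) = z₂ ⬝ᵥ b := by
      have := LinearMap.pi_apply_eq_sum_univ
        (f.toLinearMap.comp (LinearMap.inr ℝ (Fin p → ℝ) (Fin q → ℝ))) b
      simp only [LinearMap.coe_comp, Function.comp_apply, LinearMap.coe_inr,
        ContinuousLinearMap.coe_coe] at this
      rw [this, dotProduct]
      exact Finset.sum_congr rfl fun j _ => by simp [hz₂, smul_eq_mul, mul_comm]
    rw [e1, e2]
  have hk₀mem : F dlo ∈ K := ⟨dlo, ⟨le_refl _, hbox⟩, rfl⟩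
  have hmemD_of_K : ∀ k ∈ K, k ∈ D := by
    intro k hk
    exact ⟨0, ⟨fun i => le_refl 0, rfl⟩, k, hk, zero_add k⟩
  have hfk₀ : u < f (F dlo) := hub _ (hmemD_of_K _ hk₀mem)
  have hz₁nn : ∀ i, 0 ≤ z₁ i := by
    intro i
    by_contra hneg
    push_neg at hneg
    have hzne : z₁ i ≠ 0 := ne_of_lt hneg
    set e : Fin p → ℝ := fun j => if i = j then 1 else 0 with he
    set c : ℝ := (f (F dlo) - u + 1) / (-z₁ i) with hc
    have hcpos : 0 < c := div_pos (by linarith) (by linarith)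
    have hmem : ((c • e, 0) : (Fin p → ℝ) × (Fin q → ℝ)) + F dlo ∈ D := by
      refine ⟨(c • e, 0), ⟨fun j => ?_, rfl⟩, F dlo, hk₀mem, rfl⟩
      simp only [Pi.smul_apply, smul_eq_mul, he]
      have : (0:ℝ) ≤ if i = j then 1 else 0 := by positivity
      exact mul_nonneg hcpos.le this
    have := hub _ hmem
    rw [map_add] at this
    have hsc : f ((c • e, 0) : (Fin p → ℝ) × (Fin q → ℝ)) = c * z₁ i := by
      have h1 : ((c • e, 0) : (Fin p → ℝ) × (Fin q → ℝ)) = c • (e, 0) := by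
        simp [Prod.smul_def]
      rw [h1, f.map_smul, smul_eq_mul]
    rw [hsc] at this
    have hcz : c * z₁ i = -(f (F dlo) - u + 1) := by
      have hne' : -z₁ i ≠ 0 := by intro hcon; apply hzne; linarith
      rw [hc, div_mul_eq_mul_div, div_eq_iff hne']; ring
    rw [hcz] at this
    linarith
  refine ⟨z₁, z₂, u, hu0, hz₁nn, fun v hv1 hv2 => ?_⟩
  have := hub _ (hmemD_of_K _ ⟨v, ⟨hv1, hv2⟩, rfl⟩)
  rw [hF] at this
  rw [hrep] at this
  linarith

end FarkasAux

/-- Divergence of the dual variables of the projected primal-dual dynamics when the UC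
optimization is infeasible: if the trajectory `x(t)` stays in a box `S₂` disjoint from
the polyhedron `S₁ = {x : Ax ≤ g, Cx = h}`, and `λ = (λ₁, λ₂)` obeys
`λ̇₁ = [Ax(t) − g]⁺_{λ₁}`, `λ̇₂ = Cx(t) − h`, then there is a direction `z` and `ε > 0`
with `zᵀλ(t) ≥ zᵀλ(0) + εt` for all `t ≥ 0`, and hence some coordinate of `λ` has
`limsup_{t→∞} |λᵢ(t)| = ∞`. -/
theorem stmt11 {n p q : ℕ}
    (A : Matrix (Fin p) (Fin n) ℝ) (C : Matrix (Fin q) (Fin n) ℝ)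
    (g : Fin p → ℝ) (h : Fin q → ℝ) (dlo dhi : Fin n → ℝ) (hbox : dlo ≤ dhi)
    (hdisj : {x : Fin n → ℝ | A.mulVec x ≤ g ∧ C.mulVec x = h} ∩
             {x : Fin n → ℝ | dlo ≤ x ∧ x ≤ dhi} = ∅)
    (x : ℝ → Fin n → ℝ) (lam₁ : ℝ → Fin p → ℝ) (lam₂ : ℝ → Fin q → ℝ)
    (hx : ∀ t : ℝ, 0 ≤ t → dlo ≤ x t ∧ x t ≤ dhi)
    (hpos : ∀ t : ℝ, 0 ≤ t → 0 ≤ lam₁ t)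
    (hd₁ : ∀ t : ℝ, 0 ≤ t → ∀ i : Fin p,
      HasDerivAt (fun s => lam₁ s i)
        (if 0 < (A.mulVec (x t) - g) i ∨ 0 < lam₁ t i then (A.mulVec (x t) - g) i else 0) t)
    (hd₂ : ∀ t : ℝ, 0 ≤ t → ∀ i : Fin q,
      HasDerivAt (fun s => lam₂ s i) ((C.mulVec (x t) - h) i) t) :
    (∃ (z₁ : Fin p → ℝ) (z₂ : Fin q → ℝ) (ε : ℝ), 0 < ε ∧
      ∀ t : ℝ, 0 ≤ t → z₁ ⬝ᵥ lam₁ 0 + z₂ ⬝ᵥ lam₂ 0 + ε * t ≤ z₁ ⬝ᵥ lam₁ t + z₂ ⬝ᵥ lam₂ t) ∧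
    ((∃ i : Fin p, ∀ Mb : ℝ, ∃ t : ℝ, 0 ≤ t ∧ Mb ≤ |lam₁ t i|) ∨
     (∃ i : Fin q, ∀ Mb : ℝ, ∃ t : ℝ, 0 ≤ t ∧ Mb ≤ |lam₂ t i|)) := by
  classical
  obtain ⟨z₁, z₂, ε, hε, hz₁nn, hcert⟩ := exists_cert A C g h dlo dhi hbox hdisj
  set V : ℝ → ℝ := fun t => (∑ i, z₁ i * lam₁ t i) + ∑ j, z₂ j * lam₂ t j with hV
  set φ : ℝ → ℝ := fun t =>
    (∑ i, z₁ i *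
      (if 0 < (A.mulVec (x t) - g) i ∨ 0 < lam₁ t i then (A.mulVec (x t) - g) i else 0))
    + ∑ j, z₂ j * (C.mulVec (x t) - h) j with hφ
  have hVderiv : ∀ t : ℝ, 0 ≤ t → HasDerivAt V (φ t) t := by
    intro t ht
    have h1 : HasDerivAt (fun s : ℝ => ∑ i, z₁ i * lam₁ s i)
        (∑ i, z₁ i *
          (if 0 < (A.mulVec (x t) - g) i ∨ 0 < lam₁ t i then (A.mulVec (x t) - g) i else 0)) t :=
      HasDerivAt.fun_sum fun i _ => (hd₁ t ht i).const_mul (z₁ i)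
    have h2 : HasDerivAt (fun s : ℝ => ∑ j, z₂ j * lam₂ s j)
        (∑ j, z₂ j * (C.mulVec (x t) - h) j) t :=
      HasDerivAt.fun_sum fun j _ => (hd₂ t ht j).const_mul (z₂ j)
    exact h1.add h2
  have hφ_ge : ∀ t : ℝ, 0 ≤ t → ε ≤ φ t := by
    intro t ht
    have hc := hcert (x t) (hx t ht).1 (hx t ht).2
    have hsum : ∑ i, z₁ i * (A.mulVec (x t) - g) i ≤
        ∑ i, z₁ i *
          (if 0 < (A.mulVec (x t) - g) i ∨ 0 < lam₁ t i then (A.mulVec (x t) - g) i else 0) := by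
      apply Finset.sum_le_sum
      intro i _
      by_cases hcase : 0 < (A.mulVec (x t) - g) i ∨ 0 < lam₁ t i
      · rw [if_pos hcase]
      · rw [if_neg hcase]
        push_neg at hcase
        rw [mul_zero]
        exact mul_nonpos_iff.2 (Or.inl ⟨hz₁nn i, hcase.1⟩)
    have he1 : z₁ ⬝ᵥ (A.mulVec (x t) - g) = ∑ i, z₁ i * (A.mulVec (x t) - g) i := rfl
    have he2 : z₂ ⬝ᵥ (C.mulVec (x t) - h) = ∑ j, z₂ j * (C.mulVec (x t) - h) j := rfl
    rw [he1, he2] at hc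
    simp only [hφ]
    linarith
  have key : ∀ t : ℝ, 0 ≤ t → V 0 + ε * t ≤ V t := by
    intro t ht
    have H := Convex.mul_sub_le_image_sub_of_le_deriv (convex_Ici (0:ℝ)) (f := V) (C := ε)
      (fun s hs => (hVderiv s hs).continuousAt.continuousWithinAt)
      (fun s hs => by
        rw [interior_Ici] at hs
        exact ((hVderiv s (le_of_lt hs)).differentiableAt).differentiableWithinAt)
      (fun s hs => by
        rw [interior_Ici] at hs
        rw [(hVderiv s (le_of_lt hs)).deriv]
        exact hφ_ge s (le_of_lt hs))
      0 Set.self_mem_Ici t ht ht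
    linarith
  constructor
  · exact ⟨z₁, z₂, ε, hε, fun t ht => key t ht⟩
  · by_contra hcon
    push_neg at hcon
    obtain ⟨hb1, hb2⟩ := hcon
    choose M₁ hM₁ using hb1
    choose M₂ hM₂ using hb2
    set B : ℝ := (∑ i, |z₁ i| * M₁ i) + ∑ j, |z₂ j| * M₂ j with hB
    have hVle : ∀ t : ℝ, 0 ≤ t → V t ≤ B := by
      intro t ht
      have hs1 : ∑ i, z₁ i * lam₁ t i ≤ ∑ i, |z₁ i| * M₁ i := by
        apply Finset.sum_le_sum
        intro i _
        calc z₁ i * lam₁ t i ≤ |z₁ i * lam₁ t i| := le_abs_self _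
          _ = |z₁ i| * |lam₁ t i| := abs_mul _ _
          _ ≤ |z₁ i| * M₁ i :=
            mul_le_mul_of_nonneg_left (hM₁ i t ht).le (abs_nonneg _)
      have hs2 : ∑ j, z₂ j * lam₂ t j ≤ ∑ j, |z₂ j| * M₂ j := by
        apply Finset.sum_le_sum
        intro j _
        calc z₂ j * lam₂ t j ≤ |z₂ j * lam₂ t j| := le_abs_self _
          _ = |z₂ j| * |lam₂ t j| := abs_mul _ _
          _ ≤ |z₂ j| * M₂ j :=
            mul_le_mul_of_nonneg_left (hM₂ j t ht).le (abs_nonneg _)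
      simp only [hV, hB]
      linarith
    have hV0B : V 0 ≤ B := hVle 0 le_rfl
    set t₀ : ℝ := (B - V 0 + 1) / ε with ht₀
    have ht₀nn : 0 ≤ t₀ := div_nonneg (by linarith) hε.le
    have hεt₀ : ε * t₀ = B - V 0 + 1 := by
      rw [ht₀, mul_div_cancel₀ _ (ne_of_gt hε)]
    have h1 := key t₀ ht₀nn
    have h2 := hVle t₀ ht₀nn
    rw [hεt₀] at h1
    linarith
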